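/- Let b11, b12, b21, b22 ∈ (0,1). For p, q ∈ [0,1] define d1(p) = p(1−b11) + (1−p)b12 and d2(q) = q(1−b22) + (1−q)b21, and define p* = 1 if b11+b12−1 > 0 and p* = 0 otherwise, q* = 1 if b21+b22−1 < 0 and q* = 0 otherwise. Then for all p, q ∈ [0,1], d2(q)/(d1(p)+d2(q)) ≤ d2(q*)/(d1(p*)+d2(q*)); that is, the policy (p*,q*) maximizes the asymptotic proportion d2/(d1+d2) of type-1 users over all stationary policies. -/
import Mathlib

lemma frac_mono (A A' B B' : ℝ) (hA' : 0 < A') (hB' : 0 < B') (hB : 0 ≤ B)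
    (hAA : A' ≤ A) (hBB : B ≤ B') : B / (A + B) ≤ B' / (A' + B') := by
  rw [div_le_div_iff₀ (by linarith) (by linarith)]
  nlinarith

/-- The policy `(p*, q*)` maximizes the asymptotic proportion `d2/(d1+d2)` of
type-1 users over all stationary policies `(p,q) ∈ [0,1]²`. -/
theorem stmt4 (b11 b12 b21 b22 : ℝ)
    (hb11 : b11 ∈ Set.Ioo (0:ℝ) 1) (hb12 : b12 ∈ Set.Ioo (0:ℝ) 1)
    (hb21 : b21 ∈ Set.Ioo (0:ℝ) 1) (hb22 : b22 ∈ Set.Ioo (0:ℝ) 1)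
    (d1 d2 : ℝ → ℝ)
    (hd1 : ∀ p, d1 p = p * (1 - b11) + (1 - p) * b12)
    (hd2 : ∀ q, d2 q = q * (1 - b22) + (1 - q) * b21)
    (pstar qstar : ℝ)
    (hp : pstar = if b11 + b12 - 1 > 0 then 1 else 0)
    (hq : qstar = if b21 + b22 - 1 < 0 then 1 else 0) :
    ∀ p ∈ Set.Icc (0:ℝ) 1, ∀ q ∈ Set.Icc (0:ℝ) 1,
      d2 q / (d1 p + d2 q) ≤ d2 qstar / (d1 pstar + d2 qstar) := by
  obtain ⟨h1, h2⟩ := hb11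
  obtain ⟨h3, h4⟩ := hb12
  obtain ⟨h5, h6⟩ := hb21
  obtain ⟨h7, h8⟩ := hb22
  intro p hpm q hqm
  obtain ⟨hp0, hp1⟩ := hpm
  obtain ⟨hq0, hq1⟩ := hqm
  rw [hd1, hd1, hd2, hd2]
  subst hp hq
  apply frac_mono
  · split_ifs <;> nlinarith
  · split_ifs <;> nlinarith
  · nlinarith
  · split_ifs with h <;> nlinarith
  · split_ifs with h <;> nlinarith
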